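/- Let R, R_d ∈ SO(3) and e_R = ½(R_dᵀR − RᵀR_d)^∨. Then ‖e_R‖² ≤ ½‖R − R_d‖². -/

import Mathlib

open Matrix Real

noncomputable def hat (v : Fin 3 → ℝ) : Matrix (Fin 3) (Fin 3) ℝ :=
  !![0, -v 2, v 1; v 2, 0, -v 0; -v 1, v 0, 0]

noncomputable def vee (A : Matrix (Fin 3) (Fin 3) ℝ) : Fin 3 → ℝ := ![A 2 1, A 0 2, A 1 0]

/-- Frobenius norm of a 3×3 real matrix: ‖A‖ = √(tr(Aᵀ A)). -/
noncomputable def fnorm (A : Matrix (Fin 3) (Fin 3) ℝ) : ℝ := Real.sqrt ((Aᵀ * A).trace)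

/-- Euclidean norm on ℝ³. -/
noncomputable def enorm (v : Fin 3 → ℝ) : ℝ := Real.sqrt (v ⬝ᵥ v)

/-- The special orthogonal group SO(3). -/
def SO3 (R : Matrix (Fin 3) (Fin 3) ℝ) : Prop := Rᵀ * R = 1 ∧ R.det = 1

set_option maxHeartbeats 2000000 in
theorem eR_le_ER (R Rd : Matrix (Fin 3) (Fin 3) ℝ) (hR : SO3 R) (hRd : SO3 Rd) :
    (_root_.enorm ((1 / 2 : ℝ) • vee (Rdᵀ * R - Rᵀ * Rd))) ^ 2 ≤
      (1 / 2) * fnorm (R - Rd) ^ 2 := by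
  obtain ⟨hRo, hRdet⟩ := hR
  obtain ⟨hRdo, hRddet⟩ := hRd
  have hRd2 : Rd * Rdᵀ = 1 := mul_eq_one_comm.mp hRdo
  set Q : Matrix (Fin 3) (Fin 3) ℝ := Rdᵀ * R with hQdef
  have hQT : Rᵀ * Rd = Qᵀ := by rw [hQdef, Matrix.transpose_mul, Matrix.transpose_transpose]
  have hQ : Qᵀ * Q = 1 := by
    rw [hQdef, Matrix.transpose_mul, Matrix.transpose_transpose,
      mul_assoc, ← mul_assoc Rd, hRd2, one_mul, hRo]
  have hQ2 : Q * Qᵀ = 1 := mul_eq_one_comm.mp hQ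
  have hdet : Q.det = 1 := by
    rw [hQdef, Matrix.det_mul, Matrix.det_transpose, hRddet, hRdet, one_mul]
  have h1 : Q * Q.adjugate = 1 := by rw [Matrix.mul_adjugate, hdet, one_smul]
  have hadj : Q.adjugate = Qᵀ := by
    calc Q.adjugate = (Qᵀ * Q) * Q.adjugate := by rw [hQ, one_mul]
      _ = Qᵀ * (Q * Q.adjugate) := by rw [mul_assoc]
      _ = Qᵀ := by rw [h1, mul_one]
  -- scalar equations
  have row : ∀ i : Fin 3, Q i 0 * Q i 0 + Q i 1 * Q i 1 + Q i 2 * Q i 2 = 1 := by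
    intro i
    have := congrFun (congrFun hQ2 i) i
    simpa [Matrix.mul_apply, Fin.sum_univ_three, Matrix.one_apply, Matrix.transpose_apply]
      using this
  have c0 : Q 1 1 * Q 2 2 - Q 1 2 * Q 2 1 = Q 0 0 := by
    have := congrFun (congrFun hadj 0) 0
    simp [Matrix.adjugate_fin_three, Matrix.transpose_apply] at this
    linarith
  have c1 : Q 0 0 * Q 2 2 - Q 0 2 * Q 2 0 = Q 1 1 := by
    have := congrFun (congrFun hadj 1) 1
    simp [Matrix.adjugate_fin_three, Matrix.transpose_apply] at this
    linarith
  have c2 : Q 0 0 * Q 1 1 - Q 0 1 * Q 1 0 = Q 2 2 := by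
    have := congrFun (congrFun hadj 2) 2
    simp [Matrix.adjugate_fin_three, Matrix.transpose_apply] at this
    linarith
  -- the Frobenius-norm side
  have expand : (R - Rd)ᵀ * (R - Rd) = 1 - Qᵀ - Q + 1 := by
    rw [Matrix.transpose_sub]
    calc (Rᵀ - Rdᵀ) * (R - Rd)
        = Rᵀ * R - Rᵀ * Rd - Rdᵀ * R + Rdᵀ * Rd := by noncomm_ring
      _ = 1 - Qᵀ - Q + 1 := by rw [hRo, hRdo, hQT]
  have htr : ((R - Rd)ᵀ * (R - Rd)).trace = 6 - 2 * Q.trace := by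
    rw [expand]
    simp [Matrix.trace_sub, Matrix.trace_add, Matrix.trace_transpose, Matrix.trace_one]
    ring
  have hnn : (0:ℝ) ≤ ((R - Rd)ᵀ * (R - Rd)).trace := by
    simp only [Matrix.trace, Matrix.diag, Matrix.mul_apply, Matrix.transpose_apply,
      Fin.sum_univ_three, Matrix.sub_apply]
    nlinarith [mul_self_nonneg (R 0 0 - Rd 0 0), mul_self_nonneg (R 1 0 - Rd 1 0), mul_self_nonneg (R 2 0 - Rd 2 0), mul_self_nonneg (R 0 1 - Rd 0 1), mul_self_nonneg (R 1 1 - Rd 1 1), mul_self_nonneg (R 2 1 - Rd 2 1), mul_self_nonneg (R 0 2 - Rd 0 2), mul_self_nonneg (R 1 2 - Rd 1 2), mul_self_nonneg (R 2 2 - Rd 2 2)]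
  have hfn : fnorm (R - Rd) ^ 2 = 6 - 2 * Q.trace := by
    rw [fnorm, Real.sq_sqrt hnn, htr]
  -- the vector side
  have hvec : (_root_.enorm ((1 / 2 : ℝ) • vee (Q - Rᵀ * Rd))) ^ 2 =
      (1/4) * ((Q 2 1 - Q 1 2)^2 + (Q 0 2 - Q 2 0)^2 + (Q 1 0 - Q 0 1)^2) := by
    rw [hQT, _root_.enorm]
    rw [Real.sq_sqrt (by
      simp only [dotProduct, Fin.sum_univ_three, Pi.smul_apply, smul_eq_mul]
      ring_nf
      positivity)]
    simp only [dotProduct, Fin.sum_univ_three, Pi.smul_apply, smul_eq_mul, vee,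
      Matrix.cons_val_zero, Matrix.cons_val_one, Matrix.head_cons, Matrix.cons_val_two,
      Matrix.tail_cons, Matrix.sub_apply, Matrix.transpose_apply]
    ring
  rw [hvec, hfn]
  have htrace : Q.trace = Q 0 0 + Q 1 1 + Q 2 2 := by
    simp [Matrix.trace, Matrix.diag, Fin.sum_univ_three]
  rw [htrace]
  nlinarith [row 0, row 1, row 2, c0, c1, c2, sq_nonneg (3 - (Q 0 0 + Q 1 1 + Q 2 2))]
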